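/- Let (W,S) be a Coxeter system in which s_0 is evenly-laced. For J ⊆ S with s_0 ∈ J, every w ∈ W^+ factors uniquely as w = τ(x)·y with x ∈ W^J and y ∈ W^+_{τ(J)}, and this factorization is length-additive: ℓ_{R∪R^{-1}}(w) = ℓ_{R∪R^{-1}}(τ(x)) + ℓ_{R∪R^{-1}}(y). -/

import Mathlib

open CoxeterSystem

namespace AltCox

variable {W : Type*} [Group W]

/-- Word length of `w` with respect to a generating set `A`:
the minimum length of a word in `A` whose product is `w`. -/
noncomputable def glen (A : Set W) (w : W) : ℕ :=
  sInf {k | ∃ l : List W, (∀ x ∈ l, x ∈ A) ∧ l.prod = w ∧ l.length = k}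

variable {n : ℕ} {M : CoxeterMatrix (Fin (n + 1))} (cs : CoxeterSystem M W)

/-- The alternating subgroup `W⁺`: the kernel of the sign character, i.e. the
set of elements of even Coxeter length. -/
def alt : Subgroup W where
  carrier := {w | Even (cs.length w)}
  one_mem' := by simp [Nat.even_iff]
  mul_mem' := by
    intro a b ha hb
    simp only [Set.mem_setOf_eq, Nat.even_iff] at *
    have := cs.length_mul_mod_two a b
    omega
  inv_mem' := by
    intro a ha
    simpa [cs.length_inv] using ha

/-- The generating set `R = {r_i = s₀ sᵢ : i ≠ 0}` of `W⁺`. -/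
def Rset : Set W := {x | ∃ i : Fin (n + 1), i ≠ 0 ∧ x = cs.simple 0 * cs.simple i}

/-- The symmetrized generating set `R ∪ R⁻¹`. -/
def Rsym : Set W := Rset cs ∪ (Rset cs)⁻¹

/-- `ν w`: the minimum number of letters different from `s₀` among all words
in the simple reflections whose product is `w`. -/
noncomputable def nu (w : W) : ℕ :=
  sInf {k | ∃ ω : List (Fin (n + 1)), cs.wordProd ω = w ∧
    (ω.filter (fun i => i ≠ 0)).length = k}

/-- `τ w` is the unique element of `{w, w s₀}` lying in `W⁺`. -/
noncomputable def tau (w : W) : W :=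
  if Even (cs.length w) then w else w * cs.simple 0

/-- `s₀` is evenly laced: `m₀ᵢ` is even or infinite (encoded by `0`) for all `i ≠ 0`. -/
def EvenlyLaced (M : CoxeterMatrix (Fin (n + 1))) : Prop :=
  ∀ i : Fin (n + 1), i ≠ 0 → Even (M 0 i)

/-- The set of all reflections of `(W, S)`. -/
def Tall : Set W := {t | cs.IsReflection t}

/-- The set `T̂` of reflections conjugate to some simple reflection other than `s₀`. -/
def That : Set W := {t | ∃ w : W, ∃ i : Fin (n + 1), i ≠ 0 ∧ t = w * cs.simple i * w⁻¹}

/-- The set of odd palindromes of `W⁺` with respect to `R`. -/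
def Palin : Set W :=
  {p | ∃ l : List W, (∀ x ∈ l, x ∈ Rsym cs) ∧ Odd l.length ∧ l.reverse = l ∧ l.prod = p}

/-- The set of left-shortening palindromes of `w`. -/
noncomputable def PL (w : W) : Set W :=
  {p ∈ Palin cs | glen (Rsym cs) (p * w) < glen (Rsym cs) w}

/-- The set of right-shortening palindromes of `w`. -/
noncomputable def PR (w : W) : Set W :=
  {p ∈ Palin cs | glen (Rsym cs) (w * p) < glen (Rsym cs) w}

/-- The right weak order on `(W⁺, R)`. -/
noncomputable def rweak (u w : W) : Prop :=
  Relation.ReflTransGen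
    (fun a b => ∃ r ∈ Rsym cs, b = a * r ∧
      glen (Rsym cs) b = glen (Rsym cs) a + 1) u w

/-- The left weak order on `(W⁺, R)`. -/
noncomputable def lweak (u w : W) : Prop :=
  Relation.ReflTransGen
    (fun a b => ∃ r ∈ Rsym cs, b = r * a ∧
      glen (Rsym cs) b = glen (Rsym cs) a + 1) u w

/-- The right strong order on `(W⁺, R)`. -/
noncomputable def rstrong (u w : W) : Prop :=
  Relation.ReflTransGen
    (fun a b => ∃ p ∈ Palin cs, b = a * p ∧
      glen (Rsym cs) a < glen (Rsym cs) b) u w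

/-- The left strong order on `(W⁺, R)`. -/
noncomputable def lstrong (u w : W) : Prop :=
  Relation.ReflTransGen
    (fun a b => ∃ p ∈ Palin cs, b = p * a ∧
      glen (Rsym cs) a < glen (Rsym cs) b) u w

/-- The strong Bruhat order on a Coxeter system. -/
noncomputable def bruhatLE {B : Type*} {M' : CoxeterMatrix B} {W' : Type*} [Group W']
    (cs' : CoxeterSystem M' W') (u w : W') : Prop :=
  Relation.ReflTransGen
    (fun a b => ∃ t, cs'.IsReflection t ∧ b = a * t ∧ cs'.length a < cs'.length b) u w

/-- The right weak order of a Coxeter system. -/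
noncomputable def coxRweak {B : Type*} {M' : CoxeterMatrix B} {W' : Type*} [Group W']
    (cs' : CoxeterSystem M' W') (u w : W') : Prop :=
  Relation.ReflTransGen
    (fun a b => ∃ i, b = a * cs'.simple i ∧ cs'.length b = cs'.length a + 1) u w

/-- The standard parabolic subgroup `W_J` for `J ⊆ S`. -/
def parabolic (J : Set (Fin (n + 1))) : Subgroup W :=
  Subgroup.closure (cs.simple '' J)

/-- The image `τ(J) = {s₀ sᵢ : sᵢ ∈ J, i ≠ 0}` of a subset `J ⊆ S` containing `s₀`. -/
def tauSet (J : Set (Fin (n + 1))) : Set W :=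
  {x | ∃ i ∈ J, i ≠ 0 ∧ x = cs.simple 0 * cs.simple i}

/-- The set `W^J` of minimum-length coset representatives for `W/W_J`. -/
def minReps (J : Set (Fin (n + 1))) : Set W :=
  {w | ∀ i ∈ J, cs.length w < cs.length (w * cs.simple i)}


noncomputable section GeneralCox
open List in
section
open scoped Classical

variable {B : Type*} {V : Type*} [Group V] {CM : CoxeterMatrix B} (ccs : CoxeterSystem CM V)

/-- The function underlying the reflection-sign permutation representation. -/
def sigmaFun (i : B) : V × ℤˣ → V × ℤˣ :=
  fun p => (ccs.simple i * p.1 * ccs.simple i, if p.1 = ccs.simple i then -p.2 else p.2)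

lemma sigmaFun_invol (i : B) (p : V × ℤˣ) : sigmaFun ccs i (sigmaFun ccs i p) = p := by
  obtain ⟨w, e⟩ := p
  simp only [sigmaFun]
  have h1 : ccs.simple i * (ccs.simple i * w * ccs.simple i) * ccs.simple i = w := by
    rw [mul_assoc (ccs.simple i) w, ccs.simple_mul_simple_cancel_left,
      ccs.simple_mul_simple_cancel_right]
  have h2 : (ccs.simple i * w * ccs.simple i = ccs.simple i) ↔ (w = ccs.simple i) := by
    constructor
    · intro h
      have := congrArg (fun z => ccs.simple i * z * ccs.simple i) h
      simpa [h1, ccs.simple_mul_simple_self,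
        mul_assoc] using this
    · intro h; rw [h]; rw [ccs.simple_mul_simple_cancel_right]
  by_cases hw : w = ccs.simple i
  · simp [hw, h1, h2]
  · simp [hw, h1, h2]

/-- The permutation representation generator. -/
def sigma (i : B) : Equiv.Perm (V × ℤˣ) where
  toFun := sigmaFun ccs i
  invFun := sigmaFun ccs i
  left_inv := fun p => sigmaFun_invol ccs i p
  right_inv := fun p => sigmaFun_invol ccs i p

lemma sigma_apply (i : B) (w : V) (e : ℤˣ) :
    sigma ccs i (w, e) = (ccs.simple i * w * ccs.simple i, if w = ccs.simple i then -e else e) := rfl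

private lemma conj_pow_succ {G : Type*} [Group G] (a w : G) (k : ℕ) :
    a ^ k * (a * w * a⁻¹) * (a ^ k)⁻¹ = a ^ (k + 1) * w * (a ^ (k + 1))⁻¹ := by
  rw [pow_succ']
  group

private lemma conj_eq_iff {G : Type*} [Group G] (a w t : G) :
    (a * w * a⁻¹ = t) ↔ (w = a⁻¹ * t * a) := by
  constructor
  · intro h; rw [← h]; group
  · intro h; rw [h]; group

/-- The "flip points" of powers of `sigma i * sigma j`. -/
def qelt (i j : B) (l : ℕ) : V := ccs.simple j * (ccs.simple i * ccs.simple j) ^ l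

lemma sigma_mul_pow_apply (i j : B) (k : ℕ) (w : V) (e : ℤˣ) :
    ((sigma ccs i * sigma ccs j) ^ k) (w, e) =
      ((ccs.simple i * ccs.simple j) ^ k * w * ((ccs.simple i * ccs.simple j) ^ k)⁻¹,
        e * ∏ l ∈ Finset.range (2 * k), (if w = qelt ccs i j l then (-1 : ℤˣ) else 1)) := by
  induction k generalizing w e with
  | zero => simp
  | succ k ih =>
    rw [pow_succ, Equiv.Perm.mul_apply]
    have hg : (sigma ccs i * sigma ccs j) (w, e) =
        ((ccs.simple i * ccs.simple j) * w * ((ccs.simple i * ccs.simple j))⁻¹,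
          (e * (if w = qelt ccs i j 0 then (-1 : ℤˣ) else 1)) *
            (if w = qelt ccs i j 1 then (-1 : ℤˣ) else 1)) := by
      rw [Equiv.Perm.mul_apply, sigma_apply, sigma_apply]
      have hq0 : qelt ccs i j 0 = ccs.simple j := by simp [qelt]
      have hq1 : qelt ccs i j 1 = ccs.simple j * ccs.simple i * ccs.simple j := by
        simp [qelt, mul_assoc]
      have hcond : (ccs.simple j * w * ccs.simple j = ccs.simple i) ↔ (w = qelt ccs i j 1) := by
        rw [hq1]
        constructor
        · intro h
          have := congrArg (fun z => ccs.simple j * z * ccs.simple j) h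
          rw [mul_assoc (ccs.simple j) w, ccs.simple_mul_simple_cancel_left,
            ccs.simple_mul_simple_cancel_right] at this
          rw [this, mul_assoc]
        · intro h
          rw [h]
          simp [mul_assoc, ccs.simple_mul_simple_cancel_left, ccs.simple_mul_simple_self]
      congr 1
      · rw [mul_inv_rev, ccs.inv_simple, ccs.inv_simple]
        group
      · rw [hq0, hcond]
        by_cases h0 : w = ccs.simple j <;> by_cases h1 : w = qelt ccs i j 1 <;>
          simp [h0, h1, mul_comm]
    rw [hg, ih]
    have hq2 : ∀ l : ℕ, ((ccs.simple i * ccs.simple j) * w * (ccs.simple i * ccs.simple j)⁻¹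
        = qelt ccs i j l) ↔ (w = qelt ccs i j (l + 2)) := by
      intro l
      have key : (ccs.simple i * ccs.simple j)⁻¹ * ccs.simple j
          = ccs.simple j * (ccs.simple i * ccs.simple j) := by
        rw [mul_inv_rev, ccs.inv_simple, ccs.inv_simple, mul_assoc]
      have hconj : (ccs.simple i * ccs.simple j)⁻¹ * qelt ccs i j l * (ccs.simple i * ccs.simple j)
          = qelt ccs i j (l + 2) := by
        unfold qelt
        rw [← mul_assoc ((ccs.simple i * ccs.simple j)⁻¹) (ccs.simple j), key,
          mul_assoc (ccs.simple j) (ccs.simple i * ccs.simple j), ← pow_succ', mul_assoc,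
          ← pow_succ]
      rw [conj_eq_iff, hconj]
    simp only [Prod.mk.injEq]
    refine ⟨conj_pow_succ _ _ _, ?_⟩
    simp only [hq2]
    rw [(by ring : 2 * (k + 1) = 2 * k + 1 + 1), Finset.prod_range_succ',
      Finset.prod_range_succ']
    simp only [show ∀ x : ℕ, x + 1 + 1 = x + 2 from fun x => rfl]
    ring_nf
    simp only [mul_assoc, mul_comm, mul_left_comm]
lemma sigma_liftable : CM.IsLiftable (fun i => sigma ccs i) := by
  intro i j
  refine Equiv.ext fun p => ?_
  obtain ⟨w, e⟩ := p
  show ((sigma ccs i * sigma ccs j) ^ CM i j) (w, e) = (1 : Equiv.Perm (V × ℤˣ)) (w, e)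
  rw [sigma_mul_pow_apply, Equiv.Perm.one_apply]
  have hrel : (ccs.simple i * ccs.simple j) ^ CM i j = 1 := ccs.simple_mul_simple_pow i j
  have hq : ∀ l : ℕ, qelt ccs i j (CM i j + l) = qelt ccs i j l := by
    intro l
    unfold qelt
    rw [pow_add, hrel, one_mul]
  have hsplit : (∏ l ∈ Finset.range (2 * CM i j),
      (if w = qelt ccs i j l then (-1 : ℤˣ) else 1)) = 1 := by
    rw [two_mul, Finset.prod_range_add]
    simp only [hq]
    exact Int.units_mul_self _
  rw [hrel, hsplit]
  simp

/-- The permutation representation of a Coxeter group on `V × ℤˣ`. -/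
def theta : V →* Equiv.Perm (V × ℤˣ) := ccs.lift ⟨fun i => sigma ccs i, sigma_liftable ccs⟩

lemma theta_simple (i : B) : theta ccs (ccs.simple i) = sigma ccs i :=
  ccs.lift_apply_simple (sigma_liftable ccs) i

lemma rightInvSeq_cons (i : B) (ω : List B) :
    ccs.rightInvSeq (i :: ω) =
      ((ccs.wordProd ω)⁻¹ * ccs.simple i * ccs.wordProd ω) :: ccs.rightInvSeq ω := rfl

lemma theta_wordProd (ω : List B) (w : V) (e : ℤˣ) :
    theta ccs (ccs.wordProd ω) (w, e) =
      (ccs.wordProd ω * w * (ccs.wordProd ω)⁻¹,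
        e * ((-1 : ℤˣ) ^ ((ccs.rightInvSeq ω).count w))) := by
  induction ω generalizing e with
  | nil => simp
  | cons i ω ih =>
    rw [ccs.wordProd_cons, map_mul, Equiv.Perm.mul_apply, ih, theta_simple, sigma_apply,
      rightInvSeq_cons]
    have hcond : (ccs.wordProd ω * w * (ccs.wordProd ω)⁻¹ = ccs.simple i) ↔
        (w = (ccs.wordProd ω)⁻¹ * ccs.simple i * ccs.wordProd ω) := conj_eq_iff _ _ _
    rw [List.count_cons]
    simp only [Prod.mk.injEq]
    constructor
    · rw [mul_inv_rev, ccs.inv_simple]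
      group
    · rw [hcond]
      by_cases hw : w = (ccs.wordProd ω)⁻¹ * ccs.simple i * ccs.wordProd ω
      · rw [hw]
        simp only [if_pos rfl, beq_self_eq_true, if_true, pow_succ]
        rw [mul_neg_one, mul_neg]
      · have : ¬ ((ccs.wordProd ω)⁻¹ * ccs.simple i * ccs.wordProd ω == w) = true := by
          simp only [beq_iff_eq]
          exact fun h => hw h.symm
        simp [hw, this]

lemma neg_one_pow_eq_iff (a b : ℕ) :
    ((-1 : ℤˣ) ^ a = (-1 : ℤˣ) ^ b) ↔ (Odd a ↔ Odd b) := by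
  have hne : (1 : ℤˣ) ≠ -1 := by decide
  rcases Nat.even_or_odd a with ha | ha <;> rcases Nat.even_or_odd b with hb | hb
  · simp [ha.neg_one_pow, hb.neg_one_pow, Nat.not_odd_iff_even.mpr ha,
      Nat.not_odd_iff_even.mpr hb]
  · simp [ha.neg_one_pow, hb.neg_one_pow, Nat.not_odd_iff_even.mpr ha, hb, hne]
  · simp [ha.neg_one_pow, hb.neg_one_pow, Nat.not_odd_iff_even.mpr hb, ha, hne.symm]
  · simp [ha.neg_one_pow, hb.neg_one_pow, ha, hb]

/-- Parity of multiplicity in the right inversion sequence only depends on the product. -/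
lemma count_ris_parity {ω ω' : List B} (h : ccs.wordProd ω = ccs.wordProd ω') (t : V) :
    (Odd ((ccs.rightInvSeq ω).count t) ↔ Odd ((ccs.rightInvSeq ω').count t)) := by
  have h1 := theta_wordProd ccs ω t 1
  have h2 := theta_wordProd ccs ω' t 1
  rw [h] at h1
  rw [h1] at h2
  have := (Prod.mk.injEq _ _ _ _).mp h2
  rw [← neg_one_pow_eq_iff]
  have := this.2
  rwa [one_mul, one_mul] at this
lemma wordProd_eraseIdx_eraseIdx {ω : List B} {j k : ℕ} (j_lt_k : j < k)
    (k_lt_length : k < ω.length)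
    (dup : (ccs.rightInvSeq ω).getD j 1 = (ccs.rightInvSeq ω).getD k 1) :
    ccs.wordProd ω = ccs.wordProd ((ω.eraseIdx j).eraseIdx (k - 1)) := by
  set! t := (ccs.rightInvSeq ω).getD j 1 with h₁
  set! t' := (ccs.rightInvSeq (ω.eraseIdx j)).getD (k - 1) 1 with h₂
  have h₃ : t' = (ccs.rightInvSeq ω).getD k 1 := by
    rw [h₂, ccs.getD_rightInvSeq, ccs.getD_rightInvSeq,
      (Nat.sub_add_cancel (by omega) : k - 1 + 1 = k), List.eraseIdx_eq_take_drop_succ,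
      List.drop_append, List.drop_of_length_le (by simp [j_lt_k.le]),
      List.length_take,
      List.drop_drop, List.nil_append, min_eq_left_of_lt (j_lt_k.trans k_lt_length),
      Nat.add_comm, ← add_assoc, Nat.sub_add_cancel (by omega), mul_left_inj, mul_right_inj]
    congr 2
    show (List.take j ω ++ List.drop (j + 1) ω)[k - 1]? = ω[k]?
    rw [List.getElem?_append_right (by simp [Nat.le_sub_one_of_lt j_lt_k]), List.getElem?_drop]
    congr
    show j + 1 + (k - 1 - List.length (List.take j ω)) = k
    rw [List.length_take]
    omega
  have h₄ : t * t' = 1 := by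
    rw [h₁, h₃, dup]
    exact ccs.getD_rightInvSeq_mul_self _ _
  calc
    ccs.wordProd ω = ccs.wordProd ω * t * t' := by rw [mul_assoc, h₄]; group
    _ = (ccs.wordProd (ω.eraseIdx j)) * t' :=
        congrArg (· * t') (ccs.wordProd_mul_getD_rightInvSeq _ _)
    _ = ccs.wordProd ((ω.eraseIdx j).eraseIdx (k - 1)) :=
        ccs.wordProd_mul_getD_rightInvSeq _ _

lemma exists_dup_of_not_nodup {l : List V} (h : ¬ l.Nodup) :
    ∃ j k, j < k ∧ k < l.length ∧ l.getD j 1 = l.getD k 1 := by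
  by_contra hc
  push_neg at hc
  apply h
  apply List.nodup_iff_getElem?_ne_getElem?.mpr
  intro i j hij hj heq
  refine hc i j hij hj ?_
  rw [List.getD_eq_getElem?_getD, List.getD_eq_getElem?_getD, heq]

lemma odd_count_iff_mem_of_nodup {l : List V} (h : l.Nodup) (t : V) :
    Odd (l.count t) ↔ t ∈ l := by
  constructor
  · intro hodd
    have : l.count t ≠ 0 := by
      intro h0; rw [h0] at hodd; simp at hodd
    exact List.count_pos_iff.mp (Nat.pos_of_ne_zero this)
  · intro hmem
    rw [List.count_eq_one_of_mem h hmem]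
    exact odd_one

lemma isReduced_of_nodup_rightInvSeq {ω : List B} (hnd : (ccs.rightInvSeq ω).Nodup) :
    ccs.IsReduced ω := by
  obtain ⟨ω', hlen, hw⟩ := ccs.exists_reduced_word (ccs.wordProd ω)
  have hred : ccs.IsReduced ω' := by exact hlen
  have hnd' : (ccs.rightInvSeq ω').Nodup := hred.nodup_rightInvSeq
  have hmem : ∀ t : V, t ∈ ccs.rightInvSeq ω ↔ t ∈ ccs.rightInvSeq ω' := by
    intro t
    rw [← odd_count_iff_mem_of_nodup hnd t, ← odd_count_iff_mem_of_nodup hnd' t]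
    exact count_ris_parity ccs hw t
  have hfin : (ccs.rightInvSeq ω).toFinset = (ccs.rightInvSeq ω').toFinset := by
    ext t
    simp only [List.mem_toFinset]
    exact hmem t
  have hlength : ω.length = ω'.length := by
    have e1 := List.toFinset_card_of_nodup hnd
    have e2 := List.toFinset_card_of_nodup hnd'
    rw [hfin] at e1
    rw [← ccs.length_rightInvSeq ω, ← ccs.length_rightInvSeq ω', ← e1, ← e2]
  unfold CoxeterSystem.IsReduced
  rw [hw, hlength]
  exact hred

/-- The deletion property. -/
lemma exists_delete_of_not_reduced {ω : List B} (h : ¬ ccs.IsReduced ω) :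
    ∃ ω', ω'.Sublist ω ∧ ω'.length + 2 = ω.length ∧ ccs.wordProd ω' = ccs.wordProd ω := by
  have hnd : ¬ (ccs.rightInvSeq ω).Nodup := fun hnd => h (isReduced_of_nodup_rightInvSeq ccs hnd)
  obtain ⟨j, k, hjk, hk, hdup⟩ := exists_dup_of_not_nodup hnd
  rw [ccs.length_rightInvSeq] at hk
  refine ⟨(ω.eraseIdx j).eraseIdx (k - 1), ?_, ?_, ?_⟩
  · exact ((ω.eraseIdx j).eraseIdx_sublist (k - 1)).trans (ω.eraseIdx_sublist j)
  · have e1 : (ω.eraseIdx j).length + 1 = ω.length :=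
      List.length_eraseIdx_add_one (by omega)
    have e2 : ((ω.eraseIdx j).eraseIdx (k - 1)).length + 1 = (ω.eraseIdx j).length :=
      List.length_eraseIdx_add_one (by omega)
    omega
  · exact (wordProd_eraseIdx_eraseIdx ccs hjk hk hdup).symm
section Parabolic

lemma wordProd_mem_parabolic {J : Set B} {ω : List B} (hω : ∀ b ∈ ω, b ∈ J) :
    ccs.wordProd ω ∈ Subgroup.closure (ccs.simple '' J) := by
  induction ω with
  | nil => rw [ccs.wordProd_nil]; exact one_mem _
  | cons i ω ih =>
    rw [ccs.wordProd_cons]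
    exact mul_mem (Subgroup.subset_closure ⟨i, hω i List.mem_cons_self, rfl⟩)
      (ih (fun b hb => hω b (List.mem_cons_of_mem i hb)))

lemma exists_JWord_of_mem_parabolic {J : Set B} {u : V}
    (hu : u ∈ Subgroup.closure (ccs.simple '' J)) :
    ∃ ω : List B, (∀ b ∈ ω, b ∈ J) ∧ ccs.wordProd ω = u := by
  induction hu using Subgroup.closure_induction with
  | mem x hx =>
    obtain ⟨b, hb, rfl⟩ := hx
    exact ⟨[b], by simpa using hb, ccs.wordProd_singleton b⟩
  | one => exact ⟨[], by simp, ccs.wordProd_nil⟩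
  | mul x y hx hy ihx ihy =>
    obtain ⟨ω₁, h₁, rfl⟩ := ihx
    obtain ⟨ω₂, h₂, rfl⟩ := ihy
    exact ⟨ω₁ ++ ω₂, fun b hb => (List.mem_append.mp hb).elim (h₁ b) (h₂ b),
      ccs.wordProd_append ω₁ ω₂⟩
  | inv x hx ih =>
    obtain ⟨ω, h₁, rfl⟩ := ih
    exact ⟨ω.reverse, fun b hb => h₁ b (List.mem_reverse.mp hb), ccs.wordProd_reverse ω⟩

private lemma exists_reduced_JWord_aux {J : Set B} (N : ℕ) :
    ∀ ω : List B, ω.length ≤ N → (∀ b ∈ ω, b ∈ J) →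
      ∃ ω' : List B, (∀ b ∈ ω', b ∈ J) ∧ ccs.IsReduced ω' ∧ ccs.wordProd ω' = ccs.wordProd ω := by
  induction N using Nat.strong_induction_on with
  | _ N ih =>
    intro ω hlen hJ
    by_cases hred : ccs.IsReduced ω
    · exact ⟨ω, hJ, hred, rfl⟩
    · obtain ⟨γ, hsub, hγlen, hγw⟩ := exists_delete_of_not_reduced ccs hred
      rcases N with _ | N
      · omega
      · obtain ⟨ω', h1, h2, h3⟩ := ih N (by omega) γ (by omega)
          (fun b hb => hJ b (hsub.subset hb))
        exact ⟨ω', h1, h2, by rw [h3, hγw]⟩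

lemma exists_reduced_JWord {J : Set B} {u : V}
    (hu : u ∈ Subgroup.closure (ccs.simple '' J)) :
    ∃ ω : List B, (∀ b ∈ ω, b ∈ J) ∧ ccs.IsReduced ω ∧ ccs.wordProd ω = u := by
  obtain ⟨ω, hJ, rfl⟩ := exists_JWord_of_mem_parabolic ccs hu
  exact exists_reduced_JWord_aux ccs ω.length ω le_rfl hJ

lemma exists_rightDescent_of_mem_parabolic {J : Set B} {u : V}
    (hu : u ∈ Subgroup.closure (ccs.simple '' J)) (hne : u ≠ 1) :
    ∃ i ∈ J, ccs.length (u * ccs.simple i) + 1 = ccs.length u := by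
  obtain ⟨ω, hJ, hred, hw⟩ := exists_reduced_JWord ccs hu
  rcases List.eq_nil_or_concat ω with rfl | ⟨ω₀, i, rfl⟩
  · exact absurd (by rw [← hw, ccs.wordProd_nil]) hne
  · refine ⟨i, hJ i (by simp), ?_⟩
    have husi : u * ccs.simple i = ccs.wordProd ω₀ := by
      rw [← hw, ccs.wordProd_concat, ccs.simple_mul_simple_cancel_right]
    have h1 : ccs.length (u * ccs.simple i) ≤ ω₀.length := by
      rw [husi]; exact ccs.length_wordProd_le ω₀
    have h2 : ccs.length u = ω₀.length + 1 := by
      rw [← hw, hred]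
      simp
    have h3 := ccs.length_mul_simple u i
    omega

lemma exists_minCoset (J : Set B) (w : V) :
    ∃ x : V, w⁻¹ * x ∈ Subgroup.closure (ccs.simple '' J) ∧
      ∀ v : V, x⁻¹ * v ∈ Subgroup.closure (ccs.simple '' J) → ccs.length x ≤ ccs.length v := by
  set S : Set ℕ := {k | ∃ v : V, w⁻¹ * v ∈ Subgroup.closure (ccs.simple '' J) ∧
    ccs.length v = k} with hS
  have hSne : S.Nonempty := ⟨ccs.length w, w, by rw [inv_mul_cancel]; exact one_mem _, rfl⟩
  obtain ⟨x, hx, hxlen⟩ := Nat.sInf_mem hSne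
  refine ⟨x, hx, fun v hv => ?_⟩
  have : ccs.length v ∈ S := ⟨v, by
    have := mul_mem hx hv
    rwa [← mul_assoc, mul_assoc w⁻¹ x, mul_inv_cancel, mul_one] at this, rfl⟩
  rw [hxlen]
  exact Nat.sInf_le this

/-- Key additivity: a coset-minimal element times a parabolic element is length-additive. -/
lemma length_minCoset_mul {J : Set B} {x u : V}
    (hmin : ∀ v : V, x⁻¹ * v ∈ Subgroup.closure (ccs.simple '' J) → ccs.length x ≤ ccs.length v)
    (hu : u ∈ Subgroup.closure (ccs.simple '' J)) :
    ccs.length (x * u) = ccs.length x + ccs.length u := by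
  obtain ⟨α, hαred, hαw⟩ := ccs.exists_reduced_word' x
  obtain ⟨β, hβJ, hβred, hβw⟩ := exists_reduced_JWord ccs hu
  have hprod : ccs.wordProd (α ++ β) = x * u := by
    rw [ccs.wordProd_append, ← hαw, hβw]
  have hlx : ccs.length x = α.length := by rw [hαw]; exact hαred
  have hlu : ccs.length u = β.length := by rw [← hβw]; exact hβred
  by_cases hred : ccs.IsReduced (α ++ β)
  · have h := hred
    unfold CoxeterSystem.IsReduced at h
    rw [hprod, List.length_append] at h
    rw [h, hlx, hlu]
  · exfalso
    obtain ⟨γ, hsub, hγlen, hγw⟩ := exists_delete_of_not_reduced ccs hred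
    obtain ⟨γ₁, γ₂, rfl, hsub1, hsub2⟩ := List.sublist_append_iff.mp hsub
    simp only [List.length_append] at hγlen
    have hlen1 : γ₁.length ≤ α.length := hsub1.length_le
    have hlen2 : γ₂.length ≤ β.length := hsub2.length_le
    have hγsplit : ccs.wordProd γ₁ * ccs.wordProd γ₂ = x * u := by
      rw [← ccs.wordProd_append, hγw, hprod]
    rcases Nat.lt_or_ge γ₁.length α.length with h1 | h1
    · rcases Nat.lt_or_ge (γ₁.length + 1) α.length with h2 | h2
      · -- both deletions in α : γ₂ = β
        have hγ₂β : γ₂ = β := hsub2.eq_of_length (by omega)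
        subst hγ₂β
        have : ccs.wordProd γ₁ = x := by
          rw [hβw] at hγsplit
          exact mul_right_cancel hγsplit
        have hle := ccs.length_wordProd_le γ₁
        rw [this] at hle
        omega
      · -- one deletion in each part
        have hv : x⁻¹ * ccs.wordProd γ₁ ∈ Subgroup.closure (ccs.simple '' J) := by
          have h2' : ccs.wordProd γ₁ = x * u * (ccs.wordProd γ₂)⁻¹ := by
            rw [← hγsplit]; group
          rw [h2', mul_assoc x u, ← mul_assoc x⁻¹, inv_mul_cancel, one_mul]
          exact mul_mem hu (inv_mem (wordProd_mem_parabolic ccs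
            (fun b hb => hβJ b (hsub2.subset hb))))
        have := hmin _ hv
        have hle := ccs.length_wordProd_le γ₁
        omega
    · -- both deletions in β : γ₁ = α
      have hγ₁α : γ₁ = α := hsub1.eq_of_length (le_antisymm hlen1 h1)
      subst hγ₁α
      have : ccs.wordProd γ₂ = u := by
        rw [← hαw] at hγsplit
        exact mul_left_cancel hγsplit
      have hle := ccs.length_wordProd_le γ₂
      rw [this] at hle
      omega

end Parabolic
section MinRepsBridge

lemma minCoset_noDescent {J : Set B} {x : V}
    (hmin : ∀ v : V, x⁻¹ * v ∈ Subgroup.closure (ccs.simple '' J) → ccs.length x ≤ ccs.length v) :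
    ∀ i ∈ J, ccs.length x < ccs.length (x * ccs.simple i) := by
  intro i hi
  have hmem : x⁻¹ * (x * ccs.simple i) ∈ Subgroup.closure (ccs.simple '' J) := by
    rw [← mul_assoc, inv_mul_cancel, one_mul]
    exact Subgroup.subset_closure ⟨i, hi, rfl⟩
  have h1 := hmin _ hmem
  have h2 := ccs.length_mul_simple_ne x i
  omega

lemma minCoset_of_noDescent {J : Set B} {x : V}
    (hx : ∀ i ∈ J, ccs.length x < ccs.length (x * ccs.simple i)) :
    ∀ v : V, x⁻¹ * v ∈ Subgroup.closure (ccs.simple '' J) → ccs.length x ≤ ccs.length v := by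
  obtain ⟨x₀, hx₀mem, hx₀min⟩ := exists_minCoset ccs J x
  have hu₀ : x₀⁻¹ * x ∈ Subgroup.closure (ccs.simple '' J) := by
    have := inv_mem hx₀mem
    rwa [mul_inv_rev, inv_inv] at this
  have hadd : ccs.length x = ccs.length x₀ + ccs.length (x₀⁻¹ * x) := by
    have := length_minCoset_mul ccs hx₀min hu₀
    rwa [← mul_assoc, mul_inv_cancel, one_mul] at this
  by_cases hu1 : x₀⁻¹ * x = 1
  · have hxx : x = x₀ := by
      have := congrArg (fun z => x₀ * z) hu1
      simpa [← mul_assoc] using this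
    rw [hxx]
    exact hx₀min
  · exfalso
    obtain ⟨i, hiJ, hdesc⟩ := exists_rightDescent_of_mem_parabolic ccs hu₀ hu1
    have husi : (x₀⁻¹ * x) * ccs.simple i ∈ Subgroup.closure (ccs.simple '' J) :=
      mul_mem hu₀ (Subgroup.subset_closure ⟨i, hiJ, rfl⟩)
    have hadd2 : ccs.length (x * ccs.simple i) =
        ccs.length x₀ + ccs.length ((x₀⁻¹ * x) * ccs.simple i) := by
      have := length_minCoset_mul ccs hx₀min husi
      rwa [← mul_assoc, ← mul_assoc, mul_inv_cancel, one_mul] at this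
    have := hx i hiJ
    omega

lemma noDescent_unique {J : Set B} {x x' : V}
    (hx : ∀ i ∈ J, ccs.length x < ccs.length (x * ccs.simple i))
    (hx' : ∀ i ∈ J, ccs.length x' < ccs.length (x' * ccs.simple i))
    (h : x⁻¹ * x' ∈ Subgroup.closure (ccs.simple '' J)) : x = x' := by
  have hm := minCoset_of_noDescent ccs hx
  have hm' := minCoset_of_noDescent ccs hx'
  have h' : x'⁻¹ * x ∈ Subgroup.closure (ccs.simple '' J) := by
    have := inv_mem h
    rwa [mul_inv_rev, inv_inv] at this
  have e1 : ccs.length x' = ccs.length x + ccs.length (x⁻¹ * x') := by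
    have := length_minCoset_mul ccs hm h
    rwa [← mul_assoc, mul_inv_cancel, one_mul] at this
  have e2 : ccs.length x = ccs.length x' + ccs.length (x'⁻¹ * x) := by
    have := length_minCoset_mul ccs hm' h'
    rwa [← mul_assoc, mul_inv_cancel, one_mul] at this
  have hv : ccs.length (x⁻¹ * x') = 0 := by omega
  have : x⁻¹ * x' = 1 := ccs.length_eq_zero_iff.mp hv
  have := congrArg (fun z => x * z) this
  exact (by simpa [← mul_assoc] using this : x' = x).symm

end MinRepsBridge

end
end GeneralCox

section Specialized
open List
open scoped Classical

variable {n : ℕ} {M : CoxeterMatrix (Fin (n + 1))} (cs : CoxeterSystem M W)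

private lemma zmod2_mul_self (a : Multiplicative (ZMod 2)) : a * a = 1 := by
  revert a; decide

/-- The `s₀`-counting character, defined when `s₀` is evenly laced. -/
def phiFun : Fin (n + 1) → Multiplicative (ZMod 2) :=
  fun i => if i = 0 then Multiplicative.ofAdd 1 else 1

lemma phi_liftable (hEL : EvenlyLaced M) : M.IsLiftable (phiFun (n := n)) := by
  intro i j
  by_cases hi : i = 0 <;> by_cases hj : j = 0
  · subst hi; subst hj
    rw [M.diagonal]
    simp only [phiFun, if_pos rfl, pow_one]
    decide
  · subst hi
    simp only [phiFun, if_pos rfl, if_neg hj, mul_one]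
    obtain ⟨k, hk⟩ := hEL j hj
    rw [hk, pow_add]
    exact zmod2_mul_self _
  · subst hj
    simp only [phiFun, if_pos rfl, if_neg hi, one_mul]
    have hsymm : M i 0 = M 0 i := M.symmetric i 0
    obtain ⟨k, hk⟩ := hEL i hi
    rw [hsymm, hk, pow_add]
    exact zmod2_mul_self _
  · simp only [phiFun, if_neg hi, if_neg hj, mul_one, one_pow]

noncomputable def phi (hEL : EvenlyLaced M) : W →* Multiplicative (ZMod 2) :=
  cs.lift ⟨phiFun, phi_liftable hEL⟩

lemma phi_simple (hEL : EvenlyLaced M) (i : Fin (n + 1)) :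
    phi cs hEL (cs.simple i) = phiFun i :=
  cs.lift_apply_simple (phi_liftable hEL) i

private lemma monoidHom_conj {G A : Type*} [Group G] [CommGroup A] (f : G →* A) (a b : G) :
    f (a⁻¹ * b * a) = f b := by
  rw [map_mul, map_mul, map_inv, mul_comm ((f a)⁻¹) (f b), mul_assoc, inv_mul_cancel, mul_one]

lemma phi_simple_eq_one_iff (hEL : EvenlyLaced M) (i : Fin (n + 1)) :
    (phi cs hEL (cs.simple i) = 1) ↔ i ≠ 0 := by
  rw [phi_simple]
  unfold phiFun
  by_cases hi : i = 0
  · simp only [hi, if_pos rfl]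
    constructor
    · intro h; exact absurd h (by decide)
    · intro h; exact absurd rfl h
  · simp [hi]

lemma nz_eq_filterlen (hEL : EvenlyLaced M) (ω : List (Fin (n + 1))) :
    (ω.filter (fun i => i ≠ 0)).length =
      ((cs.rightInvSeq ω).filter (fun t => phi cs hEL t = 1)).length := by
  induction ω with
  | nil => simp
  | cons i ω ih =>
    rw [rightInvSeq_cons, List.filter_cons, List.filter_cons]
    have hiff : (i ≠ 0) ↔
        (phi cs hEL ((cs.wordProd ω)⁻¹ * cs.simple i * cs.wordProd ω) = 1) := by
      rw [monoidHom_conj (phi cs hEL) (cs.wordProd ω) (cs.simple i),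
        phi_simple_eq_one_iff]
    simp only [ne_eq, decide_not] at ih
    by_cases hi : i ≠ 0
    · have h2 := hiff.mp hi
      have h2s : phi cs hEL (cs.simple i) = 1 := (phi_simple_eq_one_iff cs hEL i).mpr hi
      simp [hi, h2, h2s, ih]
    · have h2 : ¬ (phi cs hEL ((cs.wordProd ω)⁻¹ * cs.simple i * cs.wordProd ω) = 1) :=
        fun h => hi (hiff.mpr h)
      have hi' : i = 0 := not_not.mp hi
      have h2s : ¬ (phi cs hEL (cs.simple (0 : Fin (n + 1))) = 1) := by
        rw [phi_simple_eq_one_iff]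
        simp
      simp [hi', h2, h2s, ih]

/-- Any word has at least as many non-`s₀` letters as a reduced word of the same element. -/
lemma nz_le (hEL : EvenlyLaced M) {ω ω' : List (Fin (n + 1))}
    (h : cs.wordProd ω = cs.wordProd ω') (hred' : cs.IsReduced ω') :
    (ω'.filter (fun i => i ≠ 0)).length ≤ (ω.filter (fun i => i ≠ 0)).length := by
  rw [nz_eq_filterlen cs hEL, nz_eq_filterlen cs hEL]
  have hnd' : (cs.rightInvSeq ω').Nodup := hred'.nodup_rightInvSeq
  have hndf : ((cs.rightInvSeq ω').filter (fun t => phi cs hEL t = 1)).Nodup :=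
    hnd'.filter _
  rw [← List.toFinset_card_of_nodup hndf]
  have hsub : ((cs.rightInvSeq ω').filter (fun t => phi cs hEL t = 1)).toFinset ⊆
      ((cs.rightInvSeq ω).filter (fun t => phi cs hEL t = 1)).toFinset := by
    intro t ht
    rw [List.mem_toFinset, List.mem_filter] at ht ⊢
    obtain ⟨hmem, hphi⟩ := ht
    refine ⟨?_, hphi⟩
    have hodd' : Odd ((cs.rightInvSeq ω').count t) := by
      rw [List.count_eq_one_of_mem hnd' hmem]
      exact odd_one
    have hodd : Odd ((cs.rightInvSeq ω).count t) := (count_ris_parity cs h t).mpr hodd'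
    have : (cs.rightInvSeq ω).count t ≠ 0 := by
      intro h0; rw [h0] at hodd; simp at hodd
    exact List.count_pos_iff.mp (Nat.pos_of_ne_zero this)
  calc ((cs.rightInvSeq ω').filter (fun t => phi cs hEL t = 1)).toFinset.card
      ≤ ((cs.rightInvSeq ω).filter (fun t => phi cs hEL t = 1)).toFinset.card :=
        Finset.card_le_card hsub
    _ ≤ ((cs.rightInvSeq ω).filter (fun t => phi cs hEL t = 1)).length :=
        List.toFinset_card_le _

/-- `nu` is computed by any reduced word. -/
lemma nu_eq_nz (hEL : EvenlyLaced M) {w : W} {ω : List (Fin (n + 1))}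
    (hred : cs.IsReduced ω) (hw : cs.wordProd ω = w) :
    nu cs w = (ω.filter (fun i => i ≠ 0)).length := by
  apply _root_.le_antisymm
  · exact Nat.sInf_le ⟨ω, hw, rfl⟩
  · apply le_csInf
    · exact ⟨(ω.filter (fun i => i ≠ 0)).length, ω, hw, rfl⟩
    · rintro k ⟨ω'', hw'', rfl⟩
      exact nz_le cs hEL (hw''.trans hw.symm) hred

lemma nu_add_of_length_add (hEL : EvenlyLaced M) {x y : W}
    (h : cs.length (x * y) = cs.length x + cs.length y) :
    nu cs (x * y) = nu cs x + nu cs y := by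
  obtain ⟨α, hαred, hαw⟩ := cs.exists_reduced_word' x
  obtain ⟨β, hβred, hβw⟩ := cs.exists_reduced_word' y
  have hprod : cs.wordProd (α ++ β) = x * y := by rw [cs.wordProd_append, ← hαw, ← hβw]
  have hred : cs.IsReduced (α ++ β) := by
    unfold CoxeterSystem.IsReduced
    rw [hprod, h, List.length_append, hαw, hβw, hαred, hβred]
  rw [nu_eq_nz cs hEL hred hprod, nu_eq_nz cs hEL hαred hαw.symm,
    nu_eq_nz cs hEL hβred hβw.symm, List.filter_append, List.length_append]

lemma nu_mul_simple_zero_aux (hEL : EvenlyLaced M) {v : W}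
    (h : cs.length (v * cs.simple 0) = cs.length v + 1) :
    nu cs (v * cs.simple 0) = nu cs v := by
  obtain ⟨α, hαred, hαw⟩ := cs.exists_reduced_word' v
  have hprod : cs.wordProd (α ++ [0]) = v * cs.simple 0 := by
    rw [cs.wordProd_append, cs.wordProd_singleton, ← hαw]
  have hred : cs.IsReduced (α ++ [0]) := by
    unfold CoxeterSystem.IsReduced
    rw [hprod, h, List.length_append, hαw, hαred]
    simp
  rw [nu_eq_nz cs hEL hred hprod, nu_eq_nz cs hEL hαred hαw.symm, List.filter_append]
  simp

lemma nu_mul_simple_zero (hEL : EvenlyLaced M) (w : W) :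
    nu cs (w * cs.simple 0) = nu cs w := by
  rcases cs.length_mul_simple w 0 with h | h
  · exact nu_mul_simple_zero_aux cs hEL h
  · have hne := cs.length_mul_simple_ne w 0
    have h' : cs.length ((w * cs.simple 0) * cs.simple 0) = cs.length (w * cs.simple 0) + 1 := by
      rw [cs.simple_mul_simple_cancel_right]
      omega
    have := nu_mul_simple_zero_aux cs hEL h'
    rw [cs.simple_mul_simple_cancel_right] at this
    exact this.symm

lemma nu_simple_zero_mul_aux (hEL : EvenlyLaced M) {v : W}
    (h : cs.length (cs.simple 0 * v) = cs.length v + 1) :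
    nu cs (cs.simple 0 * v) = nu cs v := by
  obtain ⟨α, hαred, hαw⟩ := cs.exists_reduced_word' v
  have hprod : cs.wordProd (0 :: α) = cs.simple 0 * v := by
    rw [cs.wordProd_cons, ← hαw]
  have hred : cs.IsReduced (0 :: α) := by
    unfold CoxeterSystem.IsReduced
    rw [hprod, h, List.length_cons, hαw, hαred]
  rw [nu_eq_nz cs hEL hred hprod, nu_eq_nz cs hEL hαred hαw.symm, List.filter_cons]
  simp

lemma nu_simple_zero_mul (hEL : EvenlyLaced M) (w : W) :
    nu cs (cs.simple 0 * w) = nu cs w := by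
  rcases cs.length_simple_mul w 0 with h | h
  · exact nu_simple_zero_mul_aux cs hEL h
  · have hne := cs.length_simple_mul_ne w 0
    have h' : cs.length (cs.simple 0 * (cs.simple 0 * w)) =
        cs.length (cs.simple 0 * w) + 1 := by
      rw [cs.simple_mul_simple_cancel_left]
      omega
    have := nu_simple_zero_mul_aux cs hEL h'
    rw [cs.simple_mul_simple_cancel_left] at this
    exact this.symm

end Specialized

section Specialized2
open List
open scoped Classical

variable {n : ℕ} {M : CoxeterMatrix (Fin (n + 1))} (cs : CoxeterSystem M W)

lemma length_wordProd_mod_two (ω : List (Fin (n + 1))) :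
    cs.length (cs.wordProd ω) % 2 = ω.length % 2 := by
  induction ω with
  | nil => simp
  | cons i ω ih =>
    rw [cs.wordProd_cons]
    have h1 := cs.length_simple_mul (cs.wordProd ω) i
    have h2 := cs.length_simple_mul_ne (cs.wordProd ω) i
    rw [List.length_cons]
    rcases h1 with h | h <;> omega

lemma mem_alt_iff (w : W) : w ∈ alt cs ↔ Even (cs.length w) := Iff.rfl

lemma mem_Rsym_iff {r : W} : r ∈ Rsym cs ↔
    (∃ i : Fin (n + 1), i ≠ 0 ∧ r = cs.simple 0 * cs.simple i) ∨
    (∃ i : Fin (n + 1), i ≠ 0 ∧ r = cs.simple i * cs.simple 0) := by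
  unfold Rsym Rset
  constructor
  · rintro (⟨i, hi, hr⟩ | hinv)
    · exact Or.inl ⟨i, hi, hr⟩
    · rw [Set.mem_inv] at hinv
      obtain ⟨i, hi, hr⟩ := hinv
      refine Or.inr ⟨i, hi, ?_⟩
      have := congrArg (fun z => z⁻¹) hr
      simpa [mul_inv_rev] using this
  · rintro (⟨i, hi, hr⟩ | ⟨i, hi, hr⟩)
    · exact Or.inl ⟨i, hi, hr⟩
    · refine Or.inr ?_
      rw [Set.mem_inv, hr]
      exact ⟨i, hi, by rw [mul_inv_rev, cs.inv_simple, cs.inv_simple]⟩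

private lemma exists_Rsym_list_aux (N : ℕ) :
    ∀ ω : List (Fin (n + 1)), ω.length ≤ N → Even ω.length →
      ∃ l : List W, (∀ x ∈ l, x ∈ Rsym cs) ∧ l.prod = cs.wordProd ω ∧
        l.length = (ω.filter (fun i => i ≠ 0)).length := by
  induction N using Nat.strong_induction_on with
  | _ N ih =>
    intro ω hlen heven
    match ω with
    | [] => exact ⟨[], by simp, by simp, by simp⟩
    | [b] => simp at heven
    | b :: c :: ω' =>
      have hlen' : ω'.length + 2 ≤ N := by simp at hlen; omega
      have heven' : Even ω'.length := by
        rw [Nat.even_iff] at heven ⊢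
        simp only [List.length_cons] at heven
        omega
      have hN2 : N - 1 < N := by omega
      obtain ⟨l', hl', hprod', hlen2⟩ := ih (N - 1) hN2 ω' (by omega) heven'
      by_cases hb : b = 0 <;> by_cases hc : c = 0
      · subst hb; subst hc
        refine ⟨l', hl', ?_, ?_⟩
        · rw [hprod', cs.wordProd_cons, cs.wordProd_cons,
            cs.simple_mul_simple_cancel_left]
        · rw [hlen2]
          simp
      · subst hb
        refine ⟨(cs.simple 0 * cs.simple c) :: l', ?_, ?_, ?_⟩
        · intro x hx
          rcases List.mem_cons.mp hx with rfl | hx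
          · exact Or.inl ⟨c, hc, rfl⟩
          · exact hl' x hx
        · rw [List.prod_cons, hprod', cs.wordProd_cons, cs.wordProd_cons, mul_assoc]
        · rw [List.length_cons, hlen2]
          simp [hc]
      · subst hc
        refine ⟨(cs.simple b * cs.simple 0) :: l', ?_, ?_, ?_⟩
        · intro x hx
          rcases List.mem_cons.mp hx with rfl | hx
          · exact mem_Rsym_iff cs |>.mpr (Or.inr ⟨b, hb, rfl⟩)
          · exact hl' x hx
        · rw [List.prod_cons, hprod', cs.wordProd_cons, cs.wordProd_cons, mul_assoc]
        · rw [List.length_cons, hlen2]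
          simp [hb]
      · refine ⟨(cs.simple b * cs.simple 0) :: (cs.simple 0 * cs.simple c) :: l', ?_, ?_, ?_⟩
        · intro x hx
          rcases List.mem_cons.mp hx with rfl | hx
          · exact mem_Rsym_iff cs |>.mpr (Or.inr ⟨b, hb, rfl⟩)
          · rcases List.mem_cons.mp hx with rfl | hx
            · exact Or.inl ⟨c, hc, rfl⟩
            · exact hl' x hx
        · simp [List.prod_cons, hprod', cs.wordProd_cons, mul_assoc,
            cs.simple_mul_simple_cancel_left]
        · rw [List.length_cons, List.length_cons, hlen2]
          simp [hb, hc]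

lemma Rsym_list_to_word (l : List W) (hl : ∀ x ∈ l, x ∈ Rsym cs) :
    ∃ ω : List (Fin (n + 1)), cs.wordProd ω = l.prod ∧
      (ω.filter (fun i => i ≠ 0)).length = l.length := by
  induction l with
  | nil => exact ⟨[], by simp, by simp⟩
  | cons r l ih =>
    obtain ⟨ω', hω'prod, hω'len⟩ := ih (fun x hx => hl x (List.mem_cons_of_mem r hx))
    simp only [ne_eq, decide_not] at hω'len
    rcases (mem_Rsym_iff cs).mp (hl r List.mem_cons_self) with ⟨i, hi, rfl⟩ | ⟨i, hi, rfl⟩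
    · refine ⟨0 :: i :: ω', ?_, ?_⟩
      · rw [cs.wordProd_cons, cs.wordProd_cons, hω'prod, List.prod_cons, mul_assoc]
      · simp [hi, hω'len]
    · refine ⟨i :: 0 :: ω', ?_, ?_⟩
      · rw [cs.wordProd_cons, cs.wordProd_cons, hω'prod, List.prod_cons, mul_assoc]
      · simp [hi, hω'len]

/-- On the alternating subgroup, `glen` with respect to `Rsym` equals `nu`. -/
lemma glen_eq_nu (hEL : EvenlyLaced M) {w : W} (hw : Even (cs.length w)) :
    glen (Rsym cs) w = nu cs w := by
  obtain ⟨ω, hlen, hword⟩ := cs.exists_reduced_word w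
  have hred : cs.IsReduced ω := by
    exact hlen
  have heven : Even ω.length := by
    have h : cs.length (cs.wordProd ω) = ω.length := hlen
    rw [← h, ← hword]; exact hw
  obtain ⟨l, hl, hlprod, hllen⟩ := exists_Rsym_list_aux cs ω.length ω le_rfl heven
  have hnu : nu cs w = (ω.filter (fun i => i ≠ 0)).length :=
    nu_eq_nz cs hEL hred hword.symm
  have hmem : glen (Rsym cs) w ∈ {k | ∃ l : List W, (∀ x ∈ l, x ∈ Rsym cs) ∧
      l.prod = w ∧ l.length = k} := by
    apply Nat.sInf_mem
    exact ⟨l.length, l, hl, by rw [hlprod, ← hword], rfl⟩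
  apply _root_.le_antisymm
  · apply Nat.sInf_le
    exact ⟨l, hl, by rw [hlprod, ← hword], by rw [hllen, ← hnu]⟩
  · obtain ⟨l', hl', hprod', hlen'⟩ := hmem
    obtain ⟨ω', hω'prod, hω'len⟩ := Rsym_list_to_word cs l' hl'
    rw [hnu]
    calc (ω.filter (fun i => i ≠ 0)).length
        ≤ (ω'.filter (fun i => i ≠ 0)).length :=
          nz_le cs hEL (by rw [hω'prod, hprod', hword]) hred
      _ = l'.length := hω'len
      _ = glen (Rsym cs) w := hlen'

end Specialized2

section Specialized3
open List
open scoped Classical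

variable {n : ℕ} {M : CoxeterMatrix (Fin (n + 1))} (cs : CoxeterSystem M W)

lemma closure_tauSet_le_alt (J : Set (Fin (n + 1))) :
    Subgroup.closure (tauSet cs J) ≤ alt cs := by
  rw [Subgroup.closure_le]
  rintro x ⟨i, hiJ, hi, rfl⟩
  show Even (cs.length (cs.simple 0 * cs.simple i))
  have h := cs.length_mul_mod_two (cs.simple 0) (cs.simple i)
  rw [cs.length_simple, cs.length_simple] at h
  rw [Nat.even_iff]
  omega

lemma closure_tauSet_le_parabolic (J : Set (Fin (n + 1))) (h0 : (0 : Fin (n + 1)) ∈ J) :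
    Subgroup.closure (tauSet cs J) ≤ parabolic cs J := by
  rw [Subgroup.closure_le]
  rintro x ⟨i, hiJ, hi, rfl⟩
  show cs.simple 0 * cs.simple i ∈ parabolic cs J
  exact mul_mem (Subgroup.subset_closure ⟨0, h0, rfl⟩)
    (Subgroup.subset_closure ⟨i, hiJ, rfl⟩)

private lemma tau_word_mem (J : Set (Fin (n + 1))) (N : ℕ) :
    ∀ η : List (Fin (n + 1)), η.length ≤ N → Even η.length → (∀ b ∈ η, b ∈ J) →
      cs.wordProd η ∈ Subgroup.closure (tauSet cs J) := by
  induction N using Nat.strong_induction_on with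
  | _ N ih =>
    intro η hlen heven hJ
    match η with
    | [] => rw [cs.wordProd_nil]; exact one_mem _
    | [b] => simp at heven
    | b :: c :: η' =>
      have hlen' : η'.length + 2 ≤ N := by simp at hlen; omega
      have heven' : Even η'.length := by
        rw [Nat.even_iff] at heven ⊢
        simp only [List.length_cons] at heven
        omega
      have hN2 : N - 1 < N := by omega
      have hJ' : ∀ b ∈ η', b ∈ J := fun b hb => hJ b (by simp [hb])
      have hmem' := ih (N - 1) hN2 η' (by omega) heven' hJ'
      have hbJ : b ∈ J := hJ b (by simp)
      have hcJ : c ∈ J := hJ c (by simp)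
      by_cases hb : b = 0 <;> by_cases hc : c = 0
      · subst hb; subst hc
        rw [cs.wordProd_cons, cs.wordProd_cons, cs.simple_mul_simple_cancel_left]
        exact hmem'
      · subst hb
        rw [cs.wordProd_cons, cs.wordProd_cons, ← mul_assoc]
        exact mul_mem (Subgroup.subset_closure ⟨c, hcJ, hc, rfl⟩) hmem'
      · subst hc
        rw [cs.wordProd_cons, cs.wordProd_cons, ← mul_assoc]
        refine mul_mem ?_ hmem'
        have hinv : cs.simple b * cs.simple 0 = (cs.simple 0 * cs.simple b)⁻¹ := by
          rw [mul_inv_rev, cs.inv_simple, cs.inv_simple]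
        rw [hinv]
        exact inv_mem (Subgroup.subset_closure ⟨b, hbJ, hb, rfl⟩)
      · have hsplit : cs.wordProd (b :: c :: η') =
            (cs.simple b * cs.simple 0) * ((cs.simple 0 * cs.simple c) * cs.wordProd η') := by
          rw [cs.wordProd_cons, cs.wordProd_cons]
          simp [mul_assoc, cs.simple_mul_simple_cancel_left]
        rw [hsplit]
        have hinv : cs.simple b * cs.simple 0 = (cs.simple 0 * cs.simple b)⁻¹ := by
          rw [mul_inv_rev, cs.inv_simple, cs.inv_simple]
        refine mul_mem ?_ (mul_mem (Subgroup.subset_closure ⟨c, hcJ, hc, rfl⟩) hmem')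
        rw [hinv]
        exact inv_mem (Subgroup.subset_closure ⟨b, hbJ, hb, rfl⟩)

lemma mem_closure_tauSet (J : Set (Fin (n + 1))) {y : W}
    (hy : y ∈ parabolic cs J) (heven : Even (cs.length y)) :
    y ∈ Subgroup.closure (tauSet cs J) := by
  obtain ⟨η, hJ, hw⟩ := exists_JWord_of_mem_parabolic cs hy
  have hηeven : Even η.length := by
    have := length_wordProd_mod_two cs η
    rw [hw] at this
    rw [Nat.even_iff] at heven ⊢
    omega
  rw [← hw]
  exact tau_word_mem cs J η.length η le_rfl hηeven hJ

end Specialized3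


/-- When `s₀` is evenly laced and `s₀ ∈ J ⊆ S`, every `w ∈ W⁺` factors uniquely
as `w = τ(x) y` with `x ∈ W^J`, `y ∈ W⁺_{τ(J)}`, and the factorization is
length-additive. -/
theorem statement11 (hEL : EvenlyLaced M) (J : Set (Fin (n + 1)))
    (h0 : (0 : Fin (n + 1)) ∈ J) (w : W) (hw : w ∈ alt cs) :
    (∃! p : W × W, p.1 ∈ minReps cs J ∧ p.2 ∈ Subgroup.closure (tauSet cs J) ∧
      w = tau cs p.1 * p.2) ∧
    (∀ x y : W, x ∈ minReps cs J → y ∈ Subgroup.closure (tauSet cs J) →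
      w = tau cs x * y →
      glen (Rsym cs) w = glen (Rsym cs) (tau cs x) + glen (Rsym cs) y) := by
  classical
  have hwEven : Even (cs.length w) := hw
  obtain ⟨x₀, hx₀mem, hx₀min⟩ := exists_minCoset cs J w
  set z : W := x₀⁻¹ * w with hz
  have hzmem : z ∈ Subgroup.closure (cs.simple '' J) := by
    have := inv_mem hx₀mem
    rwa [mul_inv_rev, inv_inv] at this
  have hwxz : w = x₀ * z := by rw [hz, ← mul_assoc, mul_inv_cancel, one_mul]
  have haddz : cs.length (x₀ * z) = cs.length x₀ + cs.length z :=
    length_minCoset_mul cs hx₀min hzmem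
  have hadd : cs.length w = cs.length x₀ + cs.length z := by rw [hwxz]; exact haddz
  have hminReps : x₀ ∈ minReps cs J := fun i hi => minCoset_noDescent cs hx₀min i hi
  set y₀ : W := (tau cs x₀)⁻¹ * w with hy₀
  have hty : w = tau cs x₀ * y₀ := by rw [hy₀, ← mul_assoc, mul_inv_cancel, one_mul]
  have hy₀eq : (Even (cs.length x₀) → y₀ = z) ∧ (¬ Even (cs.length x₀) → y₀ = cs.simple 0 * z) := by
    constructor
    · intro hev
      rw [hy₀, hz]
      unfold tau
      rw [if_pos hev]
    · intro hev
      rw [hy₀, hz]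
      unfold tau
      rw [if_neg hev, mul_inv_rev, cs.inv_simple, mul_assoc]
  have hy₀par : y₀ ∈ Subgroup.closure (cs.simple '' J) := by
    by_cases hev : Even (cs.length x₀)
    · rw [hy₀eq.1 hev]; exact hzmem
    · rw [hy₀eq.2 hev]
      exact mul_mem (Subgroup.subset_closure ⟨0, h0, rfl⟩) hzmem
  have hy₀Even : Even (cs.length y₀) := by
    rw [Nat.even_iff] at hwEven ⊢
    by_cases hev : Even (cs.length x₀)
    · rw [hy₀eq.1 hev]
      rw [Nat.even_iff] at hev
      omega
    · rw [hy₀eq.2 hev]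
      have hodd : ¬ cs.length x₀ % 2 = 0 := by rwa [Nat.even_iff] at hev
      have h1 := cs.length_simple_mul z 0
      have h2 := cs.length_simple_mul_ne z 0
      rcases h1 with h | h <;> omega
  have hy₀tau : y₀ ∈ Subgroup.closure (tauSet cs J) := mem_closure_tauSet cs J hy₀par hy₀Even
  have htauEven : Even (cs.length (tau cs x₀)) := by
    unfold tau
    by_cases hev : Even (cs.length x₀)
    · rw [if_pos hev]; exact hev
    · rw [if_neg hev]
      have h1 := cs.length_mul_simple x₀ 0
      have h2 := cs.length_mul_simple_ne x₀ 0
      rw [Nat.even_iff] at hev ⊢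
      rcases h1 with h | h <;> omega
  have huniq : ∀ p : W × W, p.1 ∈ minReps cs J → p.2 ∈ Subgroup.closure (tauSet cs J) →
      w = tau cs p.1 * p.2 → p = (x₀, y₀) := by
    rintro ⟨x, y⟩ hx hy hxyw
    have hyp : y ∈ Subgroup.closure (cs.simple '' J) := closure_tauSet_le_parabolic cs J h0 hy
    have hxw : ∃ hfac : W, w = x * hfac ∧ hfac ∈ Subgroup.closure (cs.simple '' J) := by
      by_cases hev : Even (cs.length x)
      · refine ⟨y, ?_, hyp⟩
        rw [hxyw]
        unfold tau
        rw [if_pos hev]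
      · refine ⟨cs.simple 0 * y, ?_, mul_mem (Subgroup.subset_closure ⟨0, h0, rfl⟩) hyp⟩
        rw [hxyw]
        unfold tau
        rw [if_neg hev, mul_assoc]
    obtain ⟨hfac, hwx, hfacmem⟩ := hxw
    have h1 : x * hfac = x₀ * z := by rw [← hwx, ← hwxz]
    have h2 : x₀ = x * (hfac * z⁻¹) := by
      rw [← mul_assoc, h1, mul_assoc, mul_inv_cancel, mul_one]
    have hcoset : x⁻¹ * x₀ ∈ Subgroup.closure (cs.simple '' J) := by
      rw [h2, ← mul_assoc, inv_mul_cancel, one_mul]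
      exact mul_mem hfacmem (inv_mem hzmem)
    have hxx₀ : x = x₀ :=
      noDescent_unique cs (fun i hi => hx i hi) (fun i hi => hminReps i hi) hcoset
    have hyy₀ : y = y₀ := by
      rw [hy₀, ← hxx₀, hxyw, ← mul_assoc, inv_mul_cancel, one_mul]
    rw [hxx₀, hyy₀]
  constructor
  · exact ⟨(x₀, y₀), ⟨hminReps, hy₀tau, hty⟩, fun q hq => huniq q hq.1 hq.2.1 hq.2.2⟩
  · intro x y hx hy hxyw
    have hpq := huniq (x, y) hx hy hxyw
    have hxx₀ : x = x₀ := congrArg Prod.fst hpq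
    have hyy₀ : y = y₀ := congrArg Prod.snd hpq
    subst hxx₀
    subst hyy₀
    have h1 : glen (Rsym cs) w = nu cs w := glen_eq_nu cs hEL hwEven
    have h2 : glen (Rsym cs) (tau cs x) = nu cs (tau cs x) := glen_eq_nu cs hEL htauEven
    have h3 : glen (Rsym cs) y₀ = nu cs y₀ := glen_eq_nu cs hEL hy₀Even
    have h4 : nu cs w = nu cs x + nu cs z := by
      rw [hwxz]
      exact nu_add_of_length_add cs hEL haddz
    have h5 : nu cs (tau cs x) = nu cs x := by
      unfold tau
      by_cases hev : Even (cs.length x)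
      · rw [if_pos hev]
      · rw [if_neg hev]
        exact nu_mul_simple_zero cs hEL x
    have h6 : nu cs y₀ = nu cs z := by
      by_cases hev : Even (cs.length x)
      · rw [hy₀eq.1 hev]
      · rw [hy₀eq.2 hev]
        exact nu_simple_zero_mul cs hEL z
    omega

end AltCox
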